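/- Let Ω ⊂ ℝⁿ be a bounded open convex set and u a convex function on Ω, continuous up to the boundary, with det D²u ≥ λ > 0 (in the Alexandrov sense) and u = h on ∂Ω for a constant h > 0, u ≥ 0 in Ω. Then h ≥ c(n, λ) |Ω|^{2/n} for a dimensional constant c(n,λ) > 0; equivalently |Ω| ≤ C(n, λ) h^{n/2}. -/

import Mathlib

open Set MeasureTheory
open scoped RealInnerProductSpace Pointwise

/-- volume of a coordinate box in Euclidean space -/
lemma euclid_box_volume (n : ℕ) (S : Fin n → Set ℝ) (hS : ∀ j, MeasurableSet (S j)) :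
    volume {w : EuclideanSpace ℝ (Fin n) | ∀ j, w j ∈ S j} = ∏ j, volume (S j) := by
  have hEq : {w : EuclideanSpace ℝ (Fin n) | ∀ j, w j ∈ S j}
      = (WithLp.ofLp (p := 2) (V := Fin n → ℝ)) ⁻¹' (univ.pi S) := by
    ext w
    simp only [mem_setOf_eq,
      mem_preimage, mem_pi, mem_univ, forall_true_left]
  rw [hEq, MeasurePreserving.measure_preimage
    (PiLp.volume_preserving_ofLp (Fin n)) (MeasurableSet.univ_pi hS).nullMeasurableSet,
    volume_pi_pi]

lemma aux_inv_pow (d : ℝ) (hd : d ≠ 0) (n : ℕ) (hn : 1 ≤ n) :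
    (d⁻¹)^n * d^(n-1) = d⁻¹ := by
  obtain ⟨m, rfl⟩ : ∃ m, n = m+1 := ⟨n-1, by omega⟩
  simp only [Nat.add_sub_cancel]
  calc (d⁻¹)^(m+1) * d^m = (d⁻¹)^m * d^m * d⁻¹ := by rw [pow_succ]; ring
  _ = d⁻¹ := by rw [← mul_pow, inv_mul_cancel₀ hd, one_pow, one_mul]

/-- The subdifferential of `u` (relative to the set `s`) at `x`. -/
def subgradientAt (n : ℕ) (u : EuclideanSpace ℝ (Fin n) → ℝ)
    (s : Set (EuclideanSpace ℝ (Fin n))) (x : EuclideanSpace ℝ (Fin n)) :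
    Set (EuclideanSpace ℝ (Fin n)) :=
  {p | ∀ y ∈ s, u x + ⟪p, y - x⟫ ≤ u y}

set_option maxHeartbeats 2000000 in
theorem stmt_5 (n : ℕ) (hn : 1 ≤ n) (lam : ℝ) (hlam : 0 < lam) :
    ∃ c > (0 : ℝ), ∀ (Ω : Set (EuclideanSpace ℝ (Fin n)))
      (u : EuclideanSpace ℝ (Fin n) → ℝ) (h : ℝ),
      IsOpen Ω → Convex ℝ Ω → Bornology.IsBounded Ω → Ω.Nonempty → 0 < h →
      ConvexOn ℝ (closure Ω) u → ContinuousOn u (closure Ω) →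
      (∀ x ∈ closure Ω, 0 ≤ u x) → (∀ x ∈ closure Ω, u x ≤ h) →
      (∀ x ∈ frontier Ω, u x = h) →
      (∀ E : Set (EuclideanSpace ℝ (Fin n)), E ⊆ Ω → MeasurableSet E →
        ENNReal.ofReal lam * volume E ≤
          volume (⋃ x ∈ E, subgradientAt n u (closure Ω) x)) →
      c * (volume Ω).toReal ^ ((2 : ℝ) / n) ≤ h := by
  have hnR : (1 : ℝ) ≤ (n : ℝ) := by exact_mod_cast hn
  have hnR0 : (0 : ℝ) < (n : ℝ) := by linarith
  have hn0 : (n : ℝ) ≠ 0 := ne_of_gt hnR0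
  refine ⟨lam ^ ((1:ℝ)/n) / (256 * (n:ℝ)^2), by positivity, ?_⟩
  intro Ω u h hO hC hB hne hh hconv hcont h0 hle hbdry hMA
  set K := closure Ω with hK
  have hKconv : Convex ℝ K := hC.closure
  have hKcomp : IsCompact K := hB.isCompact_closure
  have hKne : K.Nonempty := hne.closure
  -- interior of closure of open convex set is the set itself
  have hIC : interior K ⊆ Ω := by
    intro x hx
    obtain ⟨z, hz⟩ := hne
    rcases eq_or_ne x z with rfl | hxz
    · exact hz
    obtain ⟨δ, hδ, hball⟩ := Metric.isOpen_iff.1 isOpen_interior x hx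
    have hnz : ‖x - z‖ ≠ 0 := by
      simpa using sub_ne_zero.2 hxz
    have hnzpos : 0 < ‖x - z‖ := lt_of_le_of_ne (norm_nonneg _) (Ne.symm hnz)
    set ε := δ / (2 * ‖x - z‖) with hε
    have hεpos : 0 < ε := by positivity
    have hy : x + ε • (x - z) ∈ K := by
      apply interior_subset (s := K)
      apply hball
      rw [Metric.mem_ball, dist_eq_norm, add_sub_cancel_left, norm_smul,
        Real.norm_eq_abs, abs_of_pos hεpos, hε]
      rw [div_mul_eq_mul_div]
      rw [div_lt_iff₀ (by positivity)]
      nlinarith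
    have hxeq : x = (ε/(1+ε)) • z + (1/(1+ε)) • (x + ε • (x - z)) := by
      have h1 : (1:ℝ) + ε ≠ 0 := by positivity
      match_scalars <;> field_simp <;> ring
    have hzint : z ∈ interior Ω := by rw [hO.interior_eq]; exact hz
    have := hC.combo_interior_closure_mem_interior hzint hy
      (show 0 < ε/(1+ε) by positivity) (show (0:ℝ) ≤ 1/(1+ε) by positivity)
      (by field_simp; linarith)
    rw [← hxeq, hO.interior_eq] at this
    exact this
  -- maximizing family of points
  set F : (Fin (n+1) → EuclideanSpace ℝ (Fin n)) → ℝ :=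
    fun v => |(Matrix.of fun i j : Fin n => (v j.succ - v 0) i).det| with hF
  have hFc : Continuous F := by
    apply Continuous.abs
    apply Continuous.matrix_det
    apply continuous_matrix
    intro i j
    have h1 : Continuous fun x : EuclideanSpace ℝ (Fin n) => x i :=
      (continuous_apply i).comp (PiLp.continuous_ofLp 2 _)
    show Continuous fun v : Fin (n+1) → EuclideanSpace ℝ (Fin n) => v j.succ i - v 0 i
    exact (h1.comp (continuous_apply j.succ)).sub (h1.comp (continuous_apply 0))
  obtain ⟨vm, hvm, hmax⟩ := (isCompact_univ_pi fun _ : Fin (n+1) => hKcomp).exists_isMaxOn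
    (univ_pi_nonempty_iff.2 fun _ => hKne) hFc.continuousOn
  have hvmK : ∀ i, vm i ∈ K := fun i => hvm i (mem_univ i)
  have hmax' : ∀ v : Fin (n+1) → EuclideanSpace ℝ (Fin n), (∀ i, v i ∈ K) → F v ≤ F vm :=
    fun v hv => isMaxOn_iff.1 hmax v (fun i _ => hv i)
  set U : Matrix (Fin n) (Fin n) ℝ := Matrix.of (fun i j => (vm j.succ - vm 0) i) with hU
  set D : ℝ := |U.det| with hD
  have hFvm : F vm = D := rfl
  -- D is positive
  have hDpos : 0 < D := by
    obtain ⟨z, hz⟩ := hne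
    obtain ⟨ε, hεpos, hball⟩ := Metric.isOpen_iff.1 hO z hz
    set vt : Fin (n+1) → EuclideanSpace ℝ (Fin n) :=
      fun i => Fin.cases z (fun j => z + EuclideanSpace.single j (ε/2)) i with hvt
    have hvtK : ∀ i, vt i ∈ K := by
      intro i
      refine Fin.cases ?_ (fun j => ?_) i
      · exact subset_closure hz
      · apply subset_closure
        apply hball
        simp only [hvt, Fin.cases_succ]
        rw [Metric.mem_ball, dist_eq_norm, add_sub_cancel_left, EuclideanSpace.norm_single,
          Real.norm_eq_abs, abs_of_pos (by positivity)]
        linarith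
    have hFvt : F vt = (ε/2)^n := by
      have hMeq : (Matrix.of fun i j : Fin n => (vt j.succ - vt 0) i)
          = Matrix.diagonal (fun _ => ε/2) := by
        ext i j
        simp only [Matrix.of_apply, hvt, Fin.cases_zero, Fin.cases_succ, Matrix.diagonal_apply,
          add_sub_cancel_left]
        rw [show ((EuclideanSpace.single j (ε/2) : EuclideanSpace ℝ (Fin n)) i)
          = if i = j then ε/2 else 0 from EuclideanSpace.single_apply j (ε/2) i]
      rw [hF]
      simp only [hMeq, Matrix.det_diagonal, Finset.prod_const, Finset.card_univ,
        Fintype.card_fin]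
      rw [abs_pow, abs_of_pos (by positivity)]
    have := hmax' vt hvtK
    rw [hFvt, hFvm] at this
    calc (0:ℝ) < (ε/2)^n := by positivity
    _ ≤ D := this
  have hdet : U.det ≠ 0 := by
    intro hc
    rw [hD, hc, abs_zero] at hDpos
    exact lt_irrefl 0 hDpos
  -- claim A : cramer determinants are bounded by D
  have claimA : ∀ y ∈ K, ∀ j : Fin n, |U.cramer (fun i => (y - vm 0) i) j| ≤ D := by
    intro y hy j
    rw [Matrix.cramer_apply]
    have hupd : U.updateCol j (fun i => (y - vm 0) i)
        = Matrix.of (fun i k => ((Function.update vm j.succ y) k.succ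
            - (Function.update vm j.succ y) 0) i) := by
      ext i k
      rw [Matrix.updateCol_apply]
      rw [show (Function.update vm j.succ y) 0 = vm 0 from
        Function.update_of_ne (Fin.succ_ne_zero j).symm _ _]
      by_cases hkj : k = j
      · subst hkj
        rw [if_pos rfl, Matrix.of_apply, Function.update_self]
      · rw [if_neg hkj, Matrix.of_apply,
          Function.update_of_ne (fun hc => hkj (Fin.succ_injective _ hc)) _ _]
        rfl
    have hmem : ∀ i, Function.update vm j.succ y i ∈ K := by
      intro i
      by_cases hi : i = j.succ
      · subst hi; rw [Function.update_self]; exact hy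
      · rw [Function.update_of_ne hi]; exact hvmK i
    have := hmax' (Function.update vm j.succ y) hmem
    rw [hFvm] at this
    calc |(U.updateCol j fun i => (y - vm 0) i).det|
        = F (Function.update vm j.succ y) := by rw [hupd]
    _ ≤ D := this
  -- the coordinate map
  set tf : EuclideanSpace ℝ (Fin n) → (Fin n → ℝ) :=
    fun x => (U.det)⁻¹ • U.cramer (fun i => (x - vm 0) i) with htf
  have htf_bound : ∀ y ∈ K, ∀ j, |tf y j| ≤ 1 := by
    intro y hy j
    rw [htf]
    simp only [Pi.smul_apply, smul_eq_mul, abs_mul, abs_inv]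
    rw [← hD]
    calc D⁻¹ * |U.cramer (fun i => (y - vm 0) i) j| ≤ D⁻¹ * D :=
      mul_le_mul_of_nonneg_left (claimA y hy j) (by positivity)
    _ = 1 := inv_mul_cancel₀ (ne_of_gt hDpos)
  have hUtf : ∀ y : EuclideanSpace ℝ (Fin n), U.mulVec (tf y) = fun i => (y - vm 0) i := by
    intro y
    rw [htf]
    show U.mulVec ((U.det)⁻¹ • U.cramer fun i => (y - vm 0) i) = _
    rw [Matrix.mulVec_smul, Matrix.mulVec_cramer, smul_smul,
      inv_mul_cancel₀ hdet, one_smul]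
  -- the linear map with matrix (det U)⁻¹ • adjugate U
  set MG : Matrix (Fin n) (Fin n) ℝ := (U.det)⁻¹ • U.adjugate with hMG
  set Gl : EuclideanSpace ℝ (Fin n) →ₗ[ℝ] EuclideanSpace ℝ (Fin n) :=
    Matrix.toEuclideanLin MG with hGl
  have hMGdet : MG.det = (U.det)⁻¹ := by
    rw [hMG, Matrix.det_smul, Matrix.det_adjugate, Fintype.card_fin]
    exact aux_inv_pow U.det hdet n hn
  have hGldet : LinearMap.det Gl = (U.det)⁻¹ := by
    rw [hGl, Matrix.toEuclideanLin_eq_toLin, LinearMap.det_toLin, hMGdet]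
  have hGldet0 : LinearMap.det Gl ≠ 0 := by rw [hGldet]; exact inv_ne_zero hdet
  have htfGl : ∀ x : EuclideanSpace ℝ (Fin n), ∀ j, tf x j = Gl (x - vm 0) j := by
    intro x j
    rw [htf, hGl]
    show ((U.det)⁻¹ • U.cramer fun i => (x - vm 0) i) j
      = (Matrix.toEuclideanLin MG) (x - vm 0) j
    rw [show ((Matrix.toEuclideanLin MG) (x - vm 0)) j = MG.mulVec (x - vm 0) j from rfl,
      hMG, Matrix.smul_mulVec, Matrix.cramer_eq_adjugate_mulVec]
    rfl
  -- generic: volume of tf-boxes via translation + linear map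
  have hvol_pre : ∀ S : Set (EuclideanSpace ℝ (Fin n)),
      volume ((fun x => x - vm 0) ⁻¹' (Gl ⁻¹' S)) = ENNReal.ofReal D * volume S := by
    intro S
    have htrans : (fun x : EuclideanSpace ℝ (Fin n) => x - vm 0) ⁻¹' (Gl ⁻¹' S)
        = vm 0 +ᵥ (Gl ⁻¹' S) := by
      ext x
      rw [Set.mem_vadd_set_iff_neg_vadd_mem]
      simp only [vadd_eq_add, neg_add_eq_sub, mem_preimage]
    rw [htrans, measure_vadd, Measure.addHaar_preimage_linearMap volume hGldet0, hGldet]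
    congr 2
    rw [inv_inv, hD]
  -- K is contained in a parallelepiped
  have hKbox : K ⊆ (fun x => x - vm 0) ⁻¹'
      (Gl ⁻¹' {w : EuclideanSpace ℝ (Fin n) | ∀ j, w j ∈ Icc (-1:ℝ) 1}) := by
    intro y hy
    simp only [mem_preimage, mem_setOf_eq]
    intro j
    rw [← htfGl y j]
    exact abs_le.1 (htf_bound y hy j)
  -- the small set E
  set Eset : Set (EuclideanSpace ℝ (Fin n)) := (fun x => x - vm 0) ⁻¹'
      (Gl ⁻¹' {w : EuclideanSpace ℝ (Fin n) | ∀ j, w j ∈ Ioo (1/(4*n):ℝ) (1/(2*n))})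
      with hEset
  have hEmem : ∀ x, x ∈ Eset ↔ ∀ j, tf x j ∈ Ioo (1/(4*(n:ℝ))) (1/(2*(n:ℝ))) := by
    intro x
    rw [hEset]
    simp only [mem_preimage, mem_setOf_eq]
    constructor
    · intro hx j; rw [htfGl x j]; exact hx j
    · intro hx j; rw [← htfGl x j]; exact hx j
  have hEopen : IsOpen Eset := by
    rw [hEset]
    apply IsOpen.preimage
    · exact Continuous.sub continuous_id continuous_const
    apply IsOpen.preimage (LinearMap.continuous_of_finiteDimensional Gl)
    have : {w : EuclideanSpace ℝ (Fin n) | ∀ j, w j ∈ Ioo (1/(4*n):ℝ) (1/(2*n))}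
        = ⋂ j, (fun w : EuclideanSpace ℝ (Fin n) => w j) ⁻¹' (Ioo (1/(4*n):ℝ) (1/(2*n))) := by
      ext w; simp [mem_iInter]
    rw [this]
    exact isOpen_iInter_of_finite fun j => ((continuous_apply j).comp (PiLp.continuous_ofLp 2 _)).isOpen_preimage _ isOpen_Ioo
  -- bounds on coordinates of points of E
  have hwsum : ∀ (w : Fin n → ℝ), (∀ j, w j ∈ Ioo (1/(4*(n:ℝ))) (1/(2*(n:ℝ)))) →
      ∑ j, w j ≤ 1/2 := by
    intro w hw
    calc ∑ j, w j ≤ ∑ _j : Fin n, (1/(2*(n:ℝ))) :=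
      Finset.sum_le_sum fun j _ => (hw j).2.le
    _ = n * (1/(2*(n:ℝ))) := by rw [Finset.sum_const, Finset.card_univ, Fintype.card_fin,
        nsmul_eq_mul]
    _ = 1/2 := by field_simp
  -- E sits inside K (convex combination), hence in Ω
  have hEK : Eset ⊆ K := by
    intro x hx
    have hw := (hEmem x).1 hx
    set w : Fin n → ℝ := tf x with hwdef
    have hwpos : ∀ j, (0:ℝ) ≤ w j := fun j => le_of_lt (lt_trans (by positivity) (hw j).1)
    have hsum : ∑ j, w j ≤ 1/2 := hwsum w hw
    set μ : Fin (n+1) → ℝ := Fin.cons (1 - ∑ j, w j) w with hμ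
    have hμpos : ∀ i, 0 ≤ μ i := by
      intro i
      refine Fin.cases ?_ (fun j => ?_) i
      · rw [hμ, Fin.cons_zero]; linarith
      · rw [hμ, Fin.cons_succ]; exact hwpos j
    have hμsum : ∑ i, μ i = 1 := by
      rw [hμ, Fin.sum_cons]; ring
    have hxeq : x = ∑ i, μ i • vm i := by
      have hUw : U.mulVec w = fun i => (x - vm 0) i := hUtf x
      ext i
      have happ : (∑ j, μ j • vm j) i = ∑ j, μ j * vm j i := by
        have hmap := map_sum (EuclideanSpace.proj (𝕜 := ℝ) i) (fun j => μ j • vm j) Finset.univ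
        simp only [PiLp.proj_apply, _root_.map_smul, smul_eq_mul] at hmap
        exact hmap
      rw [happ]
      rw [Fin.sum_univ_succ]
      simp only [hμ, Fin.cons_zero, Fin.cons_succ]
      have hxi : x i - vm 0 i = ∑ j, U i j * w j := by
        have := congrFun hUw i
        rw [show (U.mulVec w) i = ∑ j, U i j * w j from by
          simp [Matrix.mulVec, dotProduct]] at this
        exact this.symm
      have hUij : ∀ j, U i j = vm j.succ i - vm 0 i := fun j => rfl
      have hexp : ∑ j, U i j * w j = ∑ j, (w j * vm j.succ i - w j * vm 0 i) := by
        apply Finset.sum_congr rfl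
        intro j _
        rw [hUij j]; ring
      rw [hexp, Finset.sum_sub_distrib, ← Finset.sum_mul] at hxi
      have : x i = (1 - ∑ j, w j) * vm 0 i + ∑ j, w j * vm j.succ i := by linarith
      exact this
    rw [hxeq]
    exact hKconv.sum_mem (fun i _ => hμpos i) hμsum (fun i _ => hvmK i)
  have hEΩ : Eset ⊆ Ω := fun x hx => hIC (interior_maximal hEK hEopen hx)
  -- inner product formula
  have hinner : ∀ p z : EuclideanSpace ℝ (Fin n), ⟪p, z⟫ = ∑ i, p i * z i := by
    intro p z
    simp [PiLp.inner_apply, RCLike.inner_apply]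
    exact Finset.sum_congr rfl fun _ _ => mul_comm _ _
  -- subgradients over E are contained in a fixed box-preimage
  set Lt : EuclideanSpace ℝ (Fin n) →ₗ[ℝ] EuclideanSpace ℝ (Fin n) :=
    Matrix.toEuclideanLin U.transpose with hLt
  have hLtdet : LinearMap.det Lt = U.det := by
    rw [hLt, Matrix.toEuclideanLin_eq_toLin, LinearMap.det_toLin, Matrix.det_transpose]
  set PBox : Set (EuclideanSpace ℝ (Fin n)) :=
    Lt ⁻¹' {w : EuclideanSpace ℝ (Fin n) | ∀ j, w j ∈ Icc (-(8*n*h)) (8*n*h)} with hPBox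
  have hgrad : ∀ x ∈ Eset, subgradientAt n u K x ⊆ PBox := by
    intro x hx p hp
    have hw := (hEmem x).1 hx
    set w : Fin n → ℝ := tf x with hwdef
    have hUw : U.mulVec w = fun i => (x - vm 0) i := hUtf x
    set q : Fin n → ℝ := fun j => ∑ i, p i * U i j with hq
    have hxK : x ∈ K := hEK hx
    have hkey : ∀ y ∈ K, ⟪p, y - x⟫ ≤ h := by
      intro y hy
      have h1 := hp y hy
      have h2 := hle y hy
      have h3 := h0 x hxK
      linarith
    -- inner products with the x - vm 0 direction
    set m : ℝ := ∑ j, w j * q j with hm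
    have hsumx : ∑ i, p i * (x i - vm 0 i) = m := by
      rw [hm]
      have : ∀ i, x i - vm 0 i = ∑ j, U i j * w j := by
        intro i
        have := congrFun hUw i
        rw [show (U.mulVec w) i = ∑ j, U i j * w j from by
          simp [Matrix.mulVec, dotProduct]] at this
        exact this.symm
      calc ∑ i, p i * (x i - vm 0 i) = ∑ i, ∑ j, p i * (U i j * w j) := by
            apply Finset.sum_congr rfl; intro i _
            rw [this i, Finset.mul_sum]
      _ = ∑ j, ∑ i, p i * (U i j * w j) := Finset.sum_comm
      _ = ∑ j, w j * q j := by
            apply Finset.sum_congr rfl; intro j _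
            rw [hq, Finset.mul_sum]
            apply Finset.sum_congr rfl; intro i _; ring
    have hF0 : -m ≤ h := by
      have := hkey (vm 0) (hvmK 0)
      rw [hinner] at this
      have heq : ∑ i, p i * (vm 0 - x) i = -m := by
        rw [← hsumx, ← Finset.sum_neg_distrib]
        apply Finset.sum_congr rfl; intro i _
        show p i * (vm 0 i - x i) = -(p i * (x i - vm 0 i))
        ring
      rw [heq] at this
      exact this
    have hFj : ∀ j, q j - m ≤ h := by
      intro j
      have := hkey (vm j.succ) (hvmK j.succ)
      rw [hinner] at this
      have heq : ∑ i, p i * (vm j.succ - x) i = q j - m := by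
        rw [← hsumx]
        show ∑ i, p i * (vm j.succ - x) i = (∑ i, p i * U i j) - ∑ i, p i * (x i - vm 0 i)
        rw [← Finset.sum_sub_distrib]
        apply Finset.sum_congr rfl; intro i _
        show p i * (vm j.succ i - x i) = p i * U i j - p i * (x i - vm 0 i)
        rw [show U i j = vm j.succ i - vm 0 i from rfl]
        ring
      rw [heq] at this
      exact this
    -- upper bound on q
    have hq2 : ∀ j, q j ≤ 2*h := by
      have hFinNe : (Finset.univ : Finset (Fin n)).Nonempty := ⟨⟨0, hn⟩, Finset.mem_univ _⟩
      obtain ⟨j₀, _, hj₀⟩ := Finset.exists_max_image Finset.univ q hFinNe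
      have hj₀' : ∀ k, q k ≤ q j₀ := fun k => hj₀ k (Finset.mem_univ k)
      rcases le_or_gt (q j₀) 0 with hQ | hQ
      · intro j; have := hj₀' j; linarith
      · have hmle : m ≤ (1/2) * q j₀ := by
          rw [hm]
          calc ∑ j, w j * q j ≤ ∑ j, w j * q j₀ := by
                apply Finset.sum_le_sum
                intro j _
                exact mul_le_mul_of_nonneg_left (hj₀' j)
                  (le_of_lt (lt_trans (by positivity) (hw j).1))
          _ = (∑ j, w j) * q j₀ := (Finset.sum_mul _ _ _).symm
          _ ≤ (1/2) * q j₀ := mul_le_mul_of_nonneg_right (hwsum w hw) hQ.le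
        have hj0b : q j₀ ≤ 2*h := by
          have := hFj j₀; linarith
        intro j; have := hj₀' j; linarith
    -- lower bound on q
    have hql : ∀ j, -(8*n*h) ≤ q j := by
      intro j
      have herase : ∑ k ∈ Finset.univ.erase j, w k * q k ≤ h := by
        calc ∑ k ∈ Finset.univ.erase j, w k * q k
            ≤ ∑ k ∈ Finset.univ.erase j, w k * (2*h) := by
              apply Finset.sum_le_sum
              intro k _
              exact mul_le_mul_of_nonneg_left (hq2 k)
                (le_of_lt (lt_trans (by positivity) (hw k).1))
        _ = (∑ k ∈ Finset.univ.erase j, w k) * (2*h) := (Finset.sum_mul _ _ _).symm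
        _ ≤ (1/2) * (2*h) := by
              apply mul_le_mul_of_nonneg_right _ (by positivity)
              calc ∑ k ∈ Finset.univ.erase j, w k ≤ ∑ k, w k := by
                    apply Finset.sum_le_sum_of_subset_of_nonneg (Finset.erase_subset _ _)
                    intro k _ _
                    exact le_of_lt (lt_trans (by positivity) (hw k).1)
              _ ≤ 1/2 := hwsum w hw
        _ = h := by ring
      have hsplit : m = w j * q j + ∑ k ∈ Finset.univ.erase j, w k * q k := by
        rw [hm, ← Finset.add_sum_erase _ _ (Finset.mem_univ j)]
      have hwj : w j * q j ≥ -(2*h) := by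
        rw [hsplit] at hF0
        linarith
      have hwjl : 1/(4*(n:ℝ)) < w j := (hw j).1
      have hwjpos : 0 < w j := lt_trans (by positivity) hwjl
      have hmul : 8*(n:ℝ)*h * (1/(4*(n:ℝ))) ≤ 8*(n:ℝ)*h * w j :=
        mul_le_mul_of_nonneg_left hwjl.le (by positivity)
      have hq4 : 8*(n:ℝ)*h * (1/(4*(n:ℝ))) = 2*h := by field_simp; ring
      nlinarith [hwj, hmul, hq4, hwjpos]
    -- conclude membership in the box preimage
    rw [hPBox]
    simp only [mem_preimage, mem_setOf_eq]
    intro j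
    have hLtp : Lt p j = q j := by
      rw [hLt, show ((Matrix.toEuclideanLin U.transpose) p) j
        = (U.transpose.mulVec p) j from rfl]
      rw [show (U.transpose.mulVec p) j = ∑ i, U.transpose j i * p i from by
        simp [Matrix.mulVec, dotProduct]]
      rw [hq]
      apply Finset.sum_congr rfl
      intro i _
      rw [Matrix.transpose_apply]
      ring
    rw [hLtp]
    constructor
    · exact hql j
    · calc q j ≤ 2*h := hq2 j
      _ ≤ 8*n*h := by nlinarith
  -- volume computations
  have hvolE : volume Eset = ENNReal.ofReal D * ENNReal.ofReal (1/(4*(n:ℝ))) ^ n := by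
    rw [hEset, hvol_pre, euclid_box_volume n (fun _ => Ioo (1/(4*(n:ℝ))) (1/(2*(n:ℝ))))
      (fun _ => measurableSet_Ioo)]
    congr 1
    rw [Finset.prod_const, Finset.card_univ, Fintype.card_fin]
    congr 1
    rw [Real.volume_Ioo]
    congr 1
    field_simp
    ring
  have hvolΩ : volume Ω ≤ ENNReal.ofReal D * ENNReal.ofReal 2 ^ n := by
    calc volume Ω ≤ volume ((fun x : EuclideanSpace ℝ (Fin n) => x - vm 0) ⁻¹'
        (Gl ⁻¹' {w : EuclideanSpace ℝ (Fin n) | ∀ j, w j ∈ Icc (-1:ℝ) 1})) :=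
      measure_mono (le_trans subset_closure hKbox)
    _ = ENNReal.ofReal D * ENNReal.ofReal 2 ^ n := by
        rw [hvol_pre, euclid_box_volume n (fun _ => Icc (-1:ℝ) 1) (fun _ => measurableSet_Icc)]
        congr 1
        rw [Finset.prod_const, Finset.card_univ, Fintype.card_fin]
        congr 1
        rw [Real.volume_Icc]
        norm_num
  have hvolP : volume PBox = ENNReal.ofReal D⁻¹ * ENNReal.ofReal (16*n*h) ^ n := by
    rw [hPBox, Measure.addHaar_preimage_linearMap volume (by rw [hLtdet]; exact hdet),
      hLtdet, euclid_box_volume n (fun _ => Icc (-(8*(n:ℝ)*h)) (8*n*h))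
      (fun _ => measurableSet_Icc)]
    congr 1
    · rw [abs_inv, ← hD]
    rw [Finset.prod_const, Finset.card_univ, Fintype.card_fin]
    congr 1
    rw [Real.volume_Icc]
    congr 1
    ring
  -- apply the Monge–Ampère bound
  have hchain : ENNReal.ofReal lam * volume Eset ≤ volume PBox := by
    calc ENNReal.ofReal lam * volume Eset
        ≤ volume (⋃ x ∈ Eset, subgradientAt n u (closure Ω) x) :=
          hMA Eset hEΩ hEopen.measurableSet
    _ ≤ volume PBox := measure_mono (Set.iUnion₂_subset hgrad)
  -- turn into a real inequality
  have hreal : lam * (D * (1/(4*(n:ℝ)))^n) ≤ D⁻¹ * (16*n*h)^n := by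
    have hlhs : ENNReal.ofReal (lam * (D * (1/(4*(n:ℝ)))^n))
        = ENNReal.ofReal lam * volume Eset := by
      rw [hvolE, ENNReal.ofReal_mul hlam.le, ENNReal.ofReal_mul hDpos.le,
        ENNReal.ofReal_pow (by positivity)]
    have hrhs : ENNReal.ofReal (D⁻¹ * (16*n*h)^n) = volume PBox := by
      rw [hvolP, ENNReal.ofReal_mul (by positivity),
        ENNReal.ofReal_pow (by positivity)]
    rw [← hlhs, ← hrhs] at hchain
    exact (ENNReal.ofReal_le_ofReal_iff (by positivity)).1 hchain
  -- extract D² bound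
  set P : ℝ := (4*(n:ℝ))^n with hP
  have hPpos : 0 < P := by positivity
  have hrealP : lam * (D * P⁻¹) ≤ D⁻¹ * (16*n*h)^n := by
    rw [hP, ← inv_pow]
    calc lam * (D * ((4*(n:ℝ))⁻¹)^n) = lam * (D * (1/(4*(n:ℝ)))^n) := by
          congr 2; rw [one_div]
    _ ≤ D⁻¹ * (16*n*h)^n := hreal
  have hD2 : lam * D^2 ≤ P * (16*n*h)^n := by
    have h3 := mul_le_mul_of_nonneg_left hrealP
      (show (0:ℝ) ≤ D * P from by positivity)
    calc lam * D^2 = D * P * (lam * (D * P⁻¹)) := by field_simp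
    _ ≤ D * P * (D⁻¹ * (16*n*h)^n) := h3
    _ = P * (16*n*h)^n := by field_simp
  -- volume of Ω in real terms
  set V : ℝ := (volume Ω).toReal with hV
  have hV0 : 0 ≤ V := ENNReal.toReal_nonneg
  have hVle : V ≤ D * 2^n := by
    apply ENNReal.toReal_le_of_le_ofReal (by positivity)
    calc volume Ω ≤ ENNReal.ofReal D * ENNReal.ofReal 2 ^ n := hvolΩ
    _ = ENNReal.ofReal (D * 2^n) := by
        rw [ENNReal.ofReal_mul hDpos.le, ENNReal.ofReal_pow (by norm_num)]
  -- key inequality : lam * V² ≤ (256 n² h)^n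
  have hkey : lam * V^2 ≤ (256*(n:ℝ)^2*h)^n := by
    have hVsq : V^2 ≤ D^2 * 4^n := by
      have := mul_self_le_mul_self hV0 hVle
      calc V^2 = V * V := sq V
      _ ≤ (D * 2^n) * (D * 2^n) := this
      _ = D^2 * 4^n := by rw [show (4:ℝ) = 2*2 by norm_num, mul_pow]; ring
    calc lam * V^2 ≤ lam * (D^2 * 4^n) :=
      mul_le_mul_of_nonneg_left hVsq hlam.le
    _ = (lam * D^2) * 4^n := by ring
    _ ≤ (P * (16*n*h)^n) * 4^n := mul_le_mul_of_nonneg_right hD2 (by positivity)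
    _ = (256*(n:ℝ)^2*h)^n := by
        rw [hP, ← mul_pow, ← mul_pow]
        congr 1
        ring
  -- rpow manipulations
  have hCpos : (0:ℝ) < 256*(n:ℝ)^2*h := by positivity
  have h4 : (lam * V^2) ^ ((1:ℝ)/n) ≤ ((256*(n:ℝ)^2*h)^n) ^ ((1:ℝ)/n) :=
    Real.rpow_le_rpow (by positivity) hkey (by positivity)
  have h5 : (((256*(n:ℝ)^2*h)^n : ℝ)) ^ ((1:ℝ)/n) = 256*(n:ℝ)^2*h := by
    rw [← Real.rpow_natCast (256*(n:ℝ)^2*h) n, ← Real.rpow_mul hCpos.le,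
      mul_one_div, div_self hn0, Real.rpow_one]
  have h6 : (lam * V^2) ^ ((1:ℝ)/n) = lam ^ ((1:ℝ)/n) * V ^ ((2:ℝ)/n) := by
    rw [Real.mul_rpow hlam.le (by positivity)]
    congr 1
    rw [← Real.rpow_natCast V 2, ← Real.rpow_mul hV0]
    congr 1
    push_cast
    ring
  rw [h6, h5] at h4
  rw [div_mul_eq_mul_div, div_le_iff₀ (by positivity : (0:ℝ) < 256*(n:ℝ)^2)]
  calc lam ^ ((1:ℝ)/n) * V ^ ((2:ℝ)/n) ≤ 256*(n:ℝ)^2*h := h4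
  _ = h * (256*(n:ℝ)^2) := by ring
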